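/- Let m, k, q, r be positive integers with 3 ≤ k ≤ m, m = k·q + r and 0 ≤ r < k. Among all sequences (a_0, …, a_{k−1}) of positive integers with a_0 + ⋯ + a_{k−1} = m, the quantity (1/2)·Σ_{i=0}^{k−1} sin(π·a_i/n) (for any fixed n ≥ m/2, e.g. taking the arcs on a circle divided into m equal parts, i.e. replacing π/n by 2π/m) is maximized exactly when r of the a_i equal q+1 and the remaining k−r equal q. Concretely: if (a_0,…,a_{k−1}) are positive integers summing to m and maximizing Σ_i sin(2π·a_i/m) among all such sequences, then max_i a_i − min_i a_i ≤ 1. -/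

import Mathlib

open Real

theorem stmt_4 (m k q r : ℕ) (hk : 3 ≤ k) (hkm : k ≤ m)
    (hm : m = k * q + r) (hr : r < k)
    (a : Fin k → ℕ) (hpos : ∀ i, 0 < a i) (hsum : ∑ i, a i = m)
    (hmax : ∀ b : Fin k → ℕ, (∀ i, 0 < b i) → (∑ i, b i = m) →
      ∑ i, sin (2 * π * b i / m) ≤ ∑ i, sin (2 * π * a i / m)) :
    ∀ i j, a i ≤ a j + 1 := by
  intro i j
  by_contra hcon
  push_neg at hcon
  have hij2 : a j + 2 ≤ a i := hcon
  have hij : i ≠ j := by rintro rfl; omega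
  have hji : j ≠ i := hij.symm
  classical
  -- generic decomposition of sums
  have key : ∀ {M : Type} [AddCommMonoid M] (f : Fin k → M),
      ∑ x, f x = f i + f j + ∑ x ∈ (Finset.univ.erase i).erase j, f x := by
    intro M _ f
    rw [← Finset.add_sum_erase _ f (Finset.mem_univ i),
      ← Finset.add_sum_erase _ f (Finset.mem_erase.mpr ⟨hji, Finset.mem_univ j⟩), ← add_assoc]
  set s : Finset (Fin k) := (Finset.univ.erase i).erase j with hs
  -- the rest is at least 1
  have hcard : s.card = k - 2 := by
    rw [hs, Finset.card_erase_of_mem (Finset.mem_erase.mpr ⟨hji, Finset.mem_univ j⟩),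
      Finset.card_erase_of_mem (Finset.mem_univ i), Finset.card_univ, Fintype.card_fin]
    omega
  have hrest : 1 ≤ ∑ x ∈ s, a x := by
    calc 1 ≤ s.card := by omega
    _ = ∑ x ∈ s, 1 := by simp
    _ ≤ ∑ x ∈ s, a x := Finset.sum_le_sum (fun x _ => hpos x)
  have hdecomp : a i + a j + ∑ x ∈ s, a x = m := by rw [← key a, hsum]
  have hub : a i + a j + 1 ≤ m := by omega
  -- define the improved sequence
  set b : Fin k → ℕ := Function.update (Function.update a i (a i - 1)) j (a j + 1) with hb
  have hbi : b i = a i - 1 := by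
    rw [hb, Function.update_of_ne hij, Function.update_self]
  have hbj : b j = a j + 1 := by rw [hb, Function.update_self]
  have hbx : ∀ x ∈ s, b x = a x := by
    intro x hx
    rw [hs] at hx
    simp only [Finset.mem_erase, Finset.mem_univ] at hx
    rw [hb, Function.update_of_ne hx.1, Function.update_of_ne hx.2.1]
  have hbpos : ∀ x, 0 < b x := by
    intro x
    by_cases h1 : x = i
    · subst h1; rw [hbi]; omega
    · by_cases h2 : x = j
      · subst h2; rw [hbj]; omega
      · rw [hb, Function.update_of_ne h2, Function.update_of_ne h1]; exact hpos x
  have hbsum : ∑ x, b x = m := by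
    have hss : ∑ x ∈ s, b x = ∑ x ∈ s, a x := Finset.sum_congr rfl hbx
    have hee : s.sum a = ∑ x ∈ s, a x := rfl
    have h1 := hpos i
    rw [key b, hbi, hbj, hss]
    omega
  have hle := hmax b hbpos hbsum
  have sas : ∀ x y : ℝ, sin x + sin y = 2 * sin ((x+y)/2) * cos ((x-y)/2) := by
    intro x y
    have h := Real.sin_sub_sin x (-y)
    rw [Real.sin_neg] at h
    rw [show x - -y = x + y by ring, show x + -y = x - y by ring] at h
    linarith
  -- real bounds
  have hm3 : (3:ℝ) ≤ (m:ℝ) := by exact_mod_cast (by omega : 3 ≤ m)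
  have hm0 : (0:ℝ) < (m:ℝ) := by linarith
  have hA1 : (1:ℝ) ≤ (a j : ℝ) := by exact_mod_cast hpos j
  have hAB : (a j : ℝ) + 2 ≤ (a i : ℝ) := by exact_mod_cast hij2
  have hub' : (a i : ℝ) + (a j : ℝ) + 1 ≤ (m:ℝ) := by exact_mod_cast hub
  set A : ℝ := (a j : ℝ)
  set B : ℝ := (a i : ℝ)
  -- trig key inequality
  have e1 : sin (2*π*(A+1)/m) + sin (2*π*(B-1)/m)
      = 2 * sin (π*(A+B)/m) * cos (π*(B-A-2)/m) := by
    rw [sas,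
      show (2*π*(A+1)/m + 2*π*(B-1)/m)/2 = π*(A+B)/m by field_simp; ring,
      show (2*π*(A+1)/m - 2*π*(B-1)/m)/2 = -(π*(B-A-2)/m) by field_simp; ring,
      Real.cos_neg]
  have e2 : sin (2*π*A/m) + sin (2*π*B/m)
      = 2 * sin (π*(A+B)/m) * cos (π*(B-A)/m) := by
    rw [sas,
      show (2*π*A/m + 2*π*B/m)/2 = π*(A+B)/m by field_simp,
      show (2*π*A/m - 2*π*B/m)/2 = -(π*(B-A)/m) by field_simp; ring,
      Real.cos_neg]
  have hπ := Real.pi_pos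
  have hsinpos : 0 < sin (π*(A+B)/m) := by
    apply Real.sin_pos_of_pos_of_lt_pi
    · positivity
    · rw [div_lt_iff₀ hm0]
      nlinarith
  have hcoslt : cos (π*(B-A)/m) < cos (π*(B-A-2)/m) := by
    apply Real.cos_lt_cos_of_nonneg_of_le_pi
    · have h2 : (0:ℝ) ≤ B - A - 2 := by linarith
      positivity
    · rw [div_le_iff₀ hm0]; nlinarith
    · rw [div_lt_div_iff₀ hm0 hm0]; nlinarith
  have hstrict : sin (2*π*A/m) + sin (2*π*B/m)
      < sin (2*π*(A+1)/m) + sin (2*π*(B-1)/m) := by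
    rw [e1, e2]
    have := mul_lt_mul_of_pos_left hcoslt (by linarith : (0:ℝ) < 2 * sin (π*(A+B)/m))
    linarith [this]
  -- derive contradiction
  have hsum_b : ∑ x, sin (2 * π * b x / m)
      = sin (2*π*(A+1)/m) + sin (2*π*(B-1)/m)
        + ∑ x ∈ s, sin (2 * π * a x / m) := by
    rw [key (fun x => sin (2 * π * b x / m))]
    have h1 : ((b i : ℕ) : ℝ) = B - 1 := by
      rw [hbi]
      have : 1 ≤ a i := hpos i
      push_cast [Nat.cast_sub this]
      ring
    have h2 : ((b j : ℕ) : ℝ) = A + 1 := by rw [hbj]; push_cast; ring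
    rw [h1, h2]
    have h3 : ∑ x ∈ s, sin (2 * π * b x / m) = ∑ x ∈ s, sin (2 * π * a x / m) :=
      Finset.sum_congr rfl (fun x hx => by rw [hbx x hx])
    rw [h3]
    ring
  have hsum_a : ∑ x, sin (2 * π * a x / m)
      = sin (2*π*B/m) + sin (2*π*A/m) + ∑ x ∈ s, sin (2 * π * a x / m) := by
    rw [key (fun x => sin (2 * π * a x / m))]
  rw [hsum_b, hsum_a] at hle
  linarith
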